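/- (LaSalle remark.) Consider the Kraus map Φ on the (9n̄+9)-dimensional truncation, and assume θ₂·√n is not an integer multiple of π for any integer n with 1 ≤ n ≤ 9n̄+8 (i.e. sin(2β(n)) never vanishes there). Then for every density matrix ρ₀ ∈ Matrix (Fin (9n̄+9)) (Fin (9n̄+9)) ℂ, every entrywise accumulation point ρ∞ of the sequence of iterates (Φ^[k](ρ₀))_{k∈ℕ} is supported on the span of |n̄⟩ and |9n̄+8⟩: ρ∞(a,b) = 0 unless both a ∈ {n̄, 9n̄+8} and b ∈ {n̄, 9n̄+8}. -/

import Mathlib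

open Matrix
open scoped ComplexOrder

noncomputable section

/-- α(n) = π·√((n+1)/(n̄+1)) -/
def alphaAng (nbar n : ℕ) : ℝ := Real.pi * Real.sqrt (((n : ℝ) + 1) / ((nbar : ℝ) + 1))

/-- β(n) = θ₂·√n/2 -/
def betaAng (θ₂ : ℝ) (n : ℕ) : ℝ := θ₂ * Real.sqrt (n : ℝ) / 2

/-- Kraus operator M_g on the (9n̄+9)-dimensional truncation. -/
def Mg9 (nbar : ℕ) (θ₂ : ℝ) : Matrix (Fin (9*nbar+9)) (Fin (9*nbar+9)) ℂ :=
  fun i j => if (i : ℕ) = (j : ℕ) + 1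
    then Complex.ofReal ((Real.cos (betaAng θ₂ (j : ℕ) / 2))^2 * Real.sin (alphaAng nbar (j : ℕ)))
    else 0

/-- Kraus operator M_e on the (9n̄+9)-dimensional truncation. -/
def Me9 (nbar : ℕ) (θ₂ : ℝ) : Matrix (Fin (9*nbar+9)) (Fin (9*nbar+9)) ℂ :=
  fun i j => if i = j
    then Complex.ofReal ((Real.cos (alphaAng nbar (j : ℕ) / 2))^2 * Real.cos (betaAng θ₂ (j : ℕ))
      - (Real.sin (alphaAng nbar (j : ℕ) / 2))^2)
    else 0

/-- Kraus operator M_m on the (9n̄+9)-dimensional truncation. -/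
def Mm9 (nbar : ℕ) (θ₂ : ℝ) : Matrix (Fin (9*nbar+9)) (Fin (9*nbar+9)) ℂ :=
  fun i j => if (i : ℕ) + 1 = (j : ℕ)
    then Complex.ofReal (Real.sin (betaAng θ₂ (j : ℕ)) * Real.cos (alphaAng nbar (j : ℕ) / 2))
    else 0

/-- Kraus map on the (9n̄+9)-dimensional truncation. -/
def Phi9 (nbar : ℕ) (θ₂ : ℝ) (ρ : Matrix (Fin (9*nbar+9)) (Fin (9*nbar+9)) ℂ) :
    Matrix (Fin (9*nbar+9)) (Fin (9*nbar+9)) ℂ :=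
  Mg9 nbar θ₂ * ρ * (Mg9 nbar θ₂)ᴴ + Me9 nbar θ₂ * ρ * (Me9 nbar θ₂)ᴴ
    + Mm9 nbar θ₂ * ρ * (Mm9 nbar θ₂)ᴴ

/-- up rate -/
def Gc (nbar : ℕ) (θ₂ : ℝ) (n : ℕ) : ℝ :=
  ((Real.cos (betaAng θ₂ n / 2))^2 * Real.sin (alphaAng nbar n))^2
/-- stay rate -/
def Ec (nbar : ℕ) (θ₂ : ℝ) (n : ℕ) : ℝ :=
  ((Real.cos (alphaAng nbar n / 2))^2 * Real.cos (betaAng θ₂ n) - (Real.sin (alphaAng nbar n / 2))^2)^2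
/-- down rate -/
def Dc (nbar : ℕ) (θ₂ : ℝ) (n : ℕ) : ℝ :=
  (Real.sin (betaAng θ₂ n) * Real.cos (alphaAng nbar n / 2))^2

lemma Gc_nonneg (nbar : ℕ) (θ₂ : ℝ) (n : ℕ) : 0 ≤ Gc nbar θ₂ n := sq_nonneg _
lemma Ec_nonneg (nbar : ℕ) (θ₂ : ℝ) (n : ℕ) : 0 ≤ Ec nbar θ₂ n := sq_nonneg _
lemma Dc_nonneg (nbar : ℕ) (θ₂ : ℝ) (n : ℕ) : 0 ≤ Dc nbar θ₂ n := sq_nonneg _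

lemma rates_sum (nbar : ℕ) (θ₂ : ℝ) (n : ℕ) : Gc nbar θ₂ n + Ec nbar θ₂ n + Dc nbar θ₂ n = 1 := by
  have key : ∀ a b : ℝ, ((Real.cos b)^2 * Real.sin (2*a))^2
      + ((Real.cos a)^2 * Real.cos (2*b) - (Real.sin a)^2)^2
      + (Real.sin (2*b) * Real.cos a)^2 = 1 := by
    intro a b
    rw [Real.sin_two_mul, Real.sin_two_mul, Real.cos_two_mul]
    have ha := Real.sin_sq_add_cos_sq a
    have hb := Real.sin_sq_add_cos_sq b
    linear_combination (4*(Real.cos b)^2*(Real.cos b)^2*(Real.cos a)^2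
        - (2*(Real.cos a)^2*(2*(Real.cos b)^2-1) - (Real.sin a)^2 + (Real.cos a)^2 - 1)) * ha
      + 4*(Real.cos b)^2*(Real.cos a)^2 * hb
  have := key (alphaAng nbar n / 2) (betaAng θ₂ n / 2)
  unfold Gc Ec Dc
  rw [show alphaAng nbar n = 2*(alphaAng nbar n / 2) by ring,
    show betaAng θ₂ n = 2*(betaAng θ₂ n / 2) by ring] 
  simpa using this

section TrigFacts
variable (nbar : ℕ) (θ₂ : ℝ)

/-- the ratio inside the square root -/
lemma ratio_pos (n : ℕ) : 0 < ((n : ℝ) + 1) / ((nbar : ℝ) + 1) := by positivity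

lemma sqrt_ratio_pos (n : ℕ) : 0 < Real.sqrt (((n : ℝ) + 1) / ((nbar : ℝ) + 1)) :=
  Real.sqrt_pos.mpr (ratio_pos nbar n)

lemma sqrt_ratio_nbar : Real.sqrt (((nbar : ℝ) + 1) / ((nbar : ℝ) + 1)) = 1 := by
  rw [div_self (by positivity), Real.sqrt_one]

lemma sqrt_ratio_mid : Real.sqrt ((((4*nbar+3 : ℕ) : ℝ) + 1) / ((nbar : ℝ) + 1)) = 2 := by
  have : (((4*nbar+3 : ℕ) : ℝ) + 1) / ((nbar : ℝ) + 1) = 4 := by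
    push_cast; field_simp; ring
  rw [this, show (4:ℝ) = 2^2 by norm_num, Real.sqrt_sq (by norm_num)]

lemma sqrt_ratio_top : Real.sqrt ((((9*nbar+8 : ℕ) : ℝ) + 1) / ((nbar : ℝ) + 1)) = 3 := by
  have : (((9*nbar+8 : ℕ) : ℝ) + 1) / ((nbar : ℝ) + 1) = 9 := by
    push_cast; field_simp; ring
  rw [this, show (9:ℝ) = 3^2 by norm_num, Real.sqrt_sq (by norm_num)]

lemma sqrt_ratio_lt {m n : ℕ} (h : m < n) :
    Real.sqrt (((m : ℝ) + 1) / ((nbar : ℝ) + 1)) < Real.sqrt (((n : ℝ) + 1) / ((nbar : ℝ) + 1)) := by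
  apply Real.sqrt_lt_sqrt (le_of_lt (ratio_pos nbar m))
  have hmn : (m:ℝ) < n := by exact_mod_cast h
  gcongr <;> linarith

/-- sin α(n) = 0 at the special points -/
lemma sin_alpha_nbar : Real.sin (alphaAng nbar nbar) = 0 := by
  unfold alphaAng; rw [sqrt_ratio_nbar, mul_one, Real.sin_pi]

lemma sin_alpha_mid : Real.sin (alphaAng nbar (4*nbar+3)) = 0 := by
  unfold alphaAng; rw [sqrt_ratio_mid]
  rw [show Real.pi * 2 = 2 * Real.pi by ring, Real.sin_two_pi]

lemma cos_half_alpha_nbar : Real.cos (alphaAng nbar nbar / 2) = 0 := by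
  unfold alphaAng; rw [sqrt_ratio_nbar, mul_one, Real.cos_pi_div_two]

lemma cos_half_alpha_top : Real.cos (alphaAng nbar (9*nbar+8) / 2) = 0 := by
  unfold alphaAng; rw [sqrt_ratio_top]
  have : Real.pi * 3 / 2 = Real.pi / 2 + Real.pi := by ring
  rw [this, Real.cos_add_pi, Real.cos_pi_div_two, neg_zero]

lemma beta_zero : betaAng θ₂ 0 = 0 := by
  unfold betaAng; simp

end TrigFacts

section NonVanish
variable {nbar : ℕ} {θ₂ : ℝ}
variable (hθ : ∀ (n : ℕ) (k : ℤ), 1 ≤ n → n ≤ 9*nbar+8 → θ₂ * Real.sqrt (n : ℝ) ≠ (k : ℝ) * Real.pi)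

include hθ in
lemma cos_half_beta_ne {n : ℕ} (h2 : n ≤ 9*nbar+8) : Real.cos (betaAng θ₂ n / 2) ≠ 0 := by
  intro h
  rw [Real.cos_eq_zero_iff] at h
  obtain ⟨k, hk⟩ := h
  have hk' : θ₂ * Real.sqrt (n : ℝ) = ((4*k+2 : ℤ) : ℝ) * Real.pi := by
    unfold betaAng at hk; push_cast; nlinarith [hk]
  rcases Nat.eq_zero_or_pos n with h0 | h1
  · subst h0
    simp only [Nat.cast_zero, Real.sqrt_zero, mul_zero] at hk'
    have h4k : ((4*k+2 : ℤ) : ℝ) ≠ 0 := by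
      intro h; exact_mod_cast absurd (by exact_mod_cast h : (4*k+2 : ℤ) = 0) (by omega)
    have := Real.pi_pos
    have : ((4*k+2 : ℤ) : ℝ) = 0 := by
      rcases mul_eq_zero.mp hk'.symm with h | h
      · exact h
      · linarith
    exact h4k this
  · exact hθ n (4*k+2) h1 h2 hk'

include hθ in
lemma sin_beta_ne {n : ℕ} (h1 : 1 ≤ n) (h2 : n ≤ 9*nbar+8) : Real.sin (betaAng θ₂ n) ≠ 0 := by
  intro h
  rw [Real.sin_eq_zero_iff] at h
  obtain ⟨k, hk⟩ := h
  exact hθ n (2*k) h1 h2 (by unfold betaAng at hk; push_cast; nlinarith [hk])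

end NonVanish

section AlphaNonVanish
variable {nbar : ℕ}

lemma sin_alpha_ne {n : ℕ} (h1 : n < 9*nbar+8) (h2 : n ≠ nbar) (h3 : n ≠ 4*nbar+3) :
    Real.sin (alphaAng nbar n) ≠ 0 := by
  have hπ := Real.pi_pos
  set t := Real.sqrt (((n : ℝ) + 1) / ((nbar : ℝ) + 1)) with ht
  have ht0 : 0 < t := sqrt_ratio_pos nbar n
  have ht3 : t < 3 := by
    have := sqrt_ratio_lt nbar h1
    rwa [sqrt_ratio_top] at this
  show Real.sin (Real.pi * t) ≠ 0
  rcases Nat.lt_trichotomy n nbar with hlt | heq | hgt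
  · -- t < 1
    have h : t < 1 := by have := sqrt_ratio_lt nbar hlt; rwa [sqrt_ratio_nbar] at this
    exact ne_of_gt (Real.sin_pos_of_pos_of_lt_pi (by positivity) (by nlinarith))
  · exact absurd heq h2
  · rcases Nat.lt_trichotomy n (4*nbar+3) with hlt' | heq' | hgt'
    · -- 1 < t < 2
      have hg : 1 < t := by have := sqrt_ratio_lt nbar hgt; rwa [sqrt_ratio_nbar] at this
      have hl : t < 2 := by have := sqrt_ratio_lt nbar hlt'; rwa [sqrt_ratio_mid] at this
      have : Real.pi * t = Real.pi * (t - 1) + Real.pi := by ring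
      rw [this, Real.sin_add_pi]
      have : 0 < Real.sin (Real.pi * (t-1)) :=
        Real.sin_pos_of_pos_of_lt_pi (by nlinarith) (by nlinarith)
      intro hc; nlinarith
    · exact absurd heq' h3
    · -- 2 < t < 3
      have hg : 2 < t := by have := sqrt_ratio_lt nbar hgt'; rwa [sqrt_ratio_mid] at this
      have : Real.pi * t = Real.pi * (t - 2) + 2 * Real.pi := by ring
      rw [this, Real.sin_add_two_pi]
      exact ne_of_gt (Real.sin_pos_of_pos_of_lt_pi (by nlinarith) (by nlinarith))

lemma cos_half_alpha_ne {n : ℕ} (h1 : n < 9*nbar+8) (h2 : n ≠ nbar) :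
    Real.cos (alphaAng nbar n / 2) ≠ 0 := by
  have hπ := Real.pi_pos
  set t := Real.sqrt (((n : ℝ) + 1) / ((nbar : ℝ) + 1)) with ht
  have ht0 : 0 < t := sqrt_ratio_pos nbar n
  have ht3 : t < 3 := by
    have := sqrt_ratio_lt nbar h1
    rwa [sqrt_ratio_top] at this
  show Real.cos (Real.pi * t / 2) ≠ 0
  rcases Nat.lt_trichotomy n nbar with hlt | heq | hgt
  · have h : t < 1 := by have := sqrt_ratio_lt nbar hlt; rwa [sqrt_ratio_nbar] at this
    exact ne_of_gt (Real.cos_pos_of_mem_Ioo ⟨by nlinarith, by nlinarith⟩)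
  · exact absurd heq h2
  · have hg : 1 < t := by have := sqrt_ratio_lt nbar hgt; rwa [sqrt_ratio_nbar] at this
    exact ne_of_lt (Real.cos_neg_of_pi_div_two_lt_of_lt (by nlinarith) (by nlinarith))

end AlphaNonVanish

section Rates
variable {nbar : ℕ} {θ₂ : ℝ}
variable (hθ : ∀ (n : ℕ) (k : ℤ), 1 ≤ n → n ≤ 9*nbar+8 → θ₂ * Real.sqrt (n : ℝ) ≠ (k : ℝ) * Real.pi)

include hθ in
lemma Gc_pos {n : ℕ} (h1 : n < 9*nbar+8) (h2 : n ≠ nbar) (h3 : n ≠ 4*nbar+3) :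
    0 < Gc nbar θ₂ n := by
  have hc := cos_half_beta_ne hθ (le_of_lt h1)
  have hs := sin_alpha_ne h1 h2 h3
  have : (Real.cos (betaAng θ₂ n / 2))^2 * Real.sin (alphaAng nbar n) ≠ 0 :=
    mul_ne_zero (pow_ne_zero 2 hc) hs
  exact lt_of_le_of_ne (sq_nonneg _) (Ne.symm (pow_ne_zero 2 this))

include hθ in
lemma Dc_pos {n : ℕ} (h0 : 1 ≤ n) (h1 : n < 9*nbar+8) (h2 : n ≠ nbar) :
    0 < Dc nbar θ₂ n := by
  have hs := sin_beta_ne hθ h0 (le_of_lt h1)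
  have hc := cos_half_alpha_ne h1 h2
  have : Real.sin (betaAng θ₂ n) * Real.cos (alphaAng nbar n / 2) ≠ 0 := mul_ne_zero hs hc
  exact lt_of_le_of_ne (sq_nonneg _) (Ne.symm (pow_ne_zero 2 this))

lemma Gc_nbar : Gc nbar θ₂ nbar = 0 := by
  unfold Gc; rw [sin_alpha_nbar]; ring

lemma Gc_mid : Gc nbar θ₂ (4*nbar+3) = 0 := by
  unfold Gc; rw [sin_alpha_mid]; ring

lemma Dc_nbar : Dc nbar θ₂ nbar = 0 := by
  unfold Dc; rw [cos_half_alpha_nbar]; ring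

lemma Dc_top : Dc nbar θ₂ (9*nbar+8) = 0 := by
  unfold Dc; rw [cos_half_alpha_top]; ring

end Rates

section MatrixDiag
variable {nbar : ℕ} {θ₂ : ℝ}

/-- the scalar entries of the Kraus operators -/
def grE (nbar : ℕ) (θ₂ : ℝ) (n : ℕ) : ℝ := (Real.cos (betaAng θ₂ n / 2))^2 * Real.sin (alphaAng nbar n)
def erE (nbar : ℕ) (θ₂ : ℝ) (n : ℕ) : ℝ :=
  (Real.cos (alphaAng nbar n / 2))^2 * Real.cos (betaAng θ₂ n) - (Real.sin (alphaAng nbar n / 2))^2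
def drE (nbar : ℕ) (θ₂ : ℝ) (n : ℕ) : ℝ := Real.sin (betaAng θ₂ n) * Real.cos (alphaAng nbar n / 2)

lemma Gc_eq (n : ℕ) : Gc nbar θ₂ n = (grE nbar θ₂ n)^2 := rfl
lemma Ec_eq (n : ℕ) : Ec nbar θ₂ n = (erE nbar θ₂ n)^2 := rfl
lemma Dc_eq (n : ℕ) : Dc nbar θ₂ n = (drE nbar θ₂ n)^2 := rfl

lemma Mg_diag (ρ : Matrix (Fin (9*nbar+9)) (Fin (9*nbar+9)) ℂ) (n : ℕ) (hn : n < 9*nbar+9) :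
    (Mg9 nbar θ₂ * ρ * (Mg9 nbar θ₂)ᴴ) ⟨n,hn⟩ ⟨n,hn⟩
      = if h : 1 ≤ n then ((Gc nbar θ₂ (n-1) : ℝ) : ℂ)
          * ρ ⟨n-1, by omega⟩ ⟨n-1, by omega⟩ else 0 := by
  simp only [Matrix.mul_apply, Matrix.conjTranspose_apply]
  by_cases h : 1 ≤ n
  · rw [dif_pos h]
    set a0 : Fin (9*nbar+9) := ⟨n-1, by omega⟩ with ha0
    have hMg : ∀ a : Fin (9*nbar+9), Mg9 nbar θ₂ ⟨n,hn⟩ a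
        = if a = a0 then ((grE nbar θ₂ (n-1) : ℝ) : ℂ) else 0 := by
      intro a
      simp only [Mg9, grE]
      by_cases ha : a = a0
      · subst ha; rw [if_pos (by simp [ha0]; omega), if_pos rfl]
      · rw [if_neg ?_, if_neg ha]
        intro hc
        exact ha (Fin.ext (by simp [ha0] at hc ⊢; omega))
    simp only [hMg, ite_mul, zero_mul, Finset.sum_ite_eq', Finset.mem_univ, if_true,
      apply_ite (star : ℂ → ℂ), star_zero, mul_ite, mul_zero, Complex.star_def,
      Complex.conj_ofReal]
    rw [Gc_eq]
    push_cast
    ring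
  · rw [dif_neg h]
    have hMg : ∀ a : Fin (9*nbar+9), Mg9 nbar θ₂ ⟨n,hn⟩ a = 0 := by
      intro a
      simp only [Mg9]
      rw [if_neg]
      omega
    simp [hMg]

lemma Me_diag (ρ : Matrix (Fin (9*nbar+9)) (Fin (9*nbar+9)) ℂ) (n : ℕ) (hn : n < 9*nbar+9) :
    (Me9 nbar θ₂ * ρ * (Me9 nbar θ₂)ᴴ) ⟨n,hn⟩ ⟨n,hn⟩
      = ((Ec nbar θ₂ n : ℝ) : ℂ) * ρ ⟨n,hn⟩ ⟨n,hn⟩ := by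
  simp only [Matrix.mul_apply, Matrix.conjTranspose_apply]
  set i0 : Fin (9*nbar+9) := ⟨n, hn⟩ with hi0
  have hMe : ∀ a : Fin (9*nbar+9), Me9 nbar θ₂ i0 a
      = if a = i0 then ((erE nbar θ₂ n : ℝ) : ℂ) else 0 := by
    intro a
    simp only [Me9, erE]
    by_cases ha : a = i0
    · subst ha; simp [hi0]
    · rw [if_neg (fun hc => ha hc.symm), if_neg ha]
  simp only [hMe, ite_mul, zero_mul, Finset.sum_ite_eq', Finset.mem_univ, if_true,
    apply_ite (star : ℂ → ℂ), star_zero, mul_ite, mul_zero, Complex.star_def,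
    Complex.conj_ofReal]
  rw [Ec_eq]
  push_cast
  ring

lemma Mm_diag (ρ : Matrix (Fin (9*nbar+9)) (Fin (9*nbar+9)) ℂ) (n : ℕ) (hn : n < 9*nbar+9) :
    (Mm9 nbar θ₂ * ρ * (Mm9 nbar θ₂)ᴴ) ⟨n,hn⟩ ⟨n,hn⟩
      = if h : n+1 < 9*nbar+9 then ((Dc nbar θ₂ (n+1) : ℝ) : ℂ)
          * ρ ⟨n+1, h⟩ ⟨n+1, h⟩ else 0 := by
  simp only [Matrix.mul_apply, Matrix.conjTranspose_apply]
  by_cases h : n+1 < 9*nbar+9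
  · rw [dif_pos h]
    set a0 : Fin (9*nbar+9) := ⟨n+1, h⟩ with ha0
    have hMm : ∀ a : Fin (9*nbar+9), Mm9 nbar θ₂ ⟨n,hn⟩ a
        = if a = a0 then ((drE nbar θ₂ (n+1) : ℝ) : ℂ) else 0 := by
      intro a
      simp only [Mm9, drE]
      by_cases ha : a = a0
      · subst ha; rw [if_pos (by simp [ha0]), if_pos rfl]
      · rw [if_neg ?_, if_neg ha]
        intro hc
        exact ha (Fin.ext (by simp [ha0] at hc ⊢; omega))
    simp only [hMm, ite_mul, zero_mul, Finset.sum_ite_eq', Finset.mem_univ, if_true,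
      apply_ite (star : ℂ → ℂ), star_zero, mul_ite, mul_zero, Complex.star_def,
      Complex.conj_ofReal]
    rw [Dc_eq]
    push_cast
    ring
  · rw [dif_neg h]
    have hMm : ∀ a : Fin (9*nbar+9), Mm9 nbar θ₂ ⟨n,hn⟩ a = 0 := by
      intro a
      simp only [Mm9]
      rw [if_neg]
      have := a.isLt
      omega
    simp [hMm]

end MatrixDiag

section Weights
variable (nbar : ℕ) (θ₂ : ℝ)

/-- increments of the weight on region A = [0, nbar-1] (mass flows up to nbar) -/
def wAinc : ℕ → ℝ
  | 0 => 1 / Gc nbar θ₂ 0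
  | (n+1) => (1 + Dc nbar θ₂ (n+1) * wAinc n) / Gc nbar θ₂ (n+1)

/-- increments of the weight on region B = [nbar+1, 4nbar+3], indexed by distance from the top -/
def wBinc : ℕ → ℝ
  | 0 => 1 / Dc nbar θ₂ (4*nbar+3)
  | (j+1) => (1 + Gc nbar θ₂ (4*nbar+2-j) * wBinc j) / Dc nbar θ₂ (4*nbar+2-j)

/-- weight on region B -/
def wBv (n : ℕ) : ℝ := ∑ m ∈ Finset.Icc (nbar+1) n, wBinc nbar θ₂ (4*nbar+3 - m)

/-- increments of the weight on region C = [4nbar+4, 9nbar+7], indexed from 4nbar+4 -/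
def wCinc : ℕ → ℝ
  | 0 => (1 + Dc nbar θ₂ (4*nbar+4) * wBv nbar θ₂ (4*nbar+3)) / Gc nbar θ₂ (4*nbar+4)
  | (j+1) => (1 + Dc nbar θ₂ (4*nbar+5+j) * wCinc j) / Gc nbar θ₂ (4*nbar+5+j)

/-- the Lyapunov weight -/
def wv (n : ℕ) : ℝ :=
  if n < nbar then ∑ j ∈ Finset.Ico n nbar, wAinc nbar θ₂ j
  else if n = nbar then 0
  else if n ≤ 4*nbar+3 then wBv nbar θ₂ n
  else if n < 9*nbar+8 then ∑ j ∈ Finset.Ico n (9*nbar+8), wCinc nbar θ₂ (j - (4*nbar+4))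
  else 0

end Weights

section WeightFacts
variable {nbar : ℕ} {θ₂ : ℝ}
variable (hθ : ∀ (n : ℕ) (k : ℤ), 1 ≤ n → n ≤ 9*nbar+8 → θ₂ * Real.sqrt (n : ℝ) ≠ (k : ℝ) * Real.pi)

include hθ

lemma Gc_pos_A {n : ℕ} (h : n < nbar) : 0 < Gc nbar θ₂ n :=
  Gc_pos hθ (by omega) (by omega) (by omega)

lemma Gc_pos_C {n : ℕ} (h1 : 4*nbar+3 < n) (h2 : n < 9*nbar+8) : 0 < Gc nbar θ₂ n :=
  Gc_pos hθ h2 (by omega) (by omega)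

lemma Dc_pos_B {n : ℕ} (h1 : nbar+1 ≤ n) (h2 : n ≤ 4*nbar+3) : 0 < Dc nbar θ₂ n :=
  Dc_pos hθ (by omega) (by omega) (by omega)

lemma wAinc_nonneg : ∀ n, n < nbar → 0 ≤ wAinc nbar θ₂ n := by
  intro n
  induction n with
  | zero =>
    intro h
    rw [wAinc]
    have := Gc_pos_A hθ (n := 0) h
    positivity
  | succ k ih =>
    intro h
    rw [wAinc]
    have h1 : 0 < Gc nbar θ₂ (k+1) := Gc_pos_A hθ h
    have h2 : 0 ≤ Dc nbar θ₂ (k+1) := Dc_nonneg nbar θ₂ (k+1)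
    have h3 : 0 ≤ wAinc nbar θ₂ k := ih (by omega)
    positivity

lemma wBinc_nonneg : ∀ j, j ≤ 3*nbar+2 → 0 ≤ wBinc nbar θ₂ j := by
  intro j
  induction j with
  | zero =>
    intro h; rw [wBinc]
    have := Dc_pos_B hθ (n := 4*nbar+3) (by omega) (by omega)
    positivity
  | succ k ih =>
    intro h
    rw [wBinc]
    have h1 : 0 < Dc nbar θ₂ (4*nbar+2-k) := Dc_pos_B hθ (by omega) (by omega)
    have h2 : 0 ≤ Gc nbar θ₂ (4*nbar+2-k) := Gc_nonneg nbar θ₂ _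
    have h3 : 0 ≤ wBinc nbar θ₂ k := ih (by omega)
    positivity

lemma wBv_nonneg {n : ℕ} (h : n ≤ 4*nbar+3) : 0 ≤ wBv nbar θ₂ n := by
  apply Finset.sum_nonneg
  intro m hm
  rw [Finset.mem_Icc] at hm
  exact wBinc_nonneg hθ _ (by omega)

lemma wCinc_nonneg : ∀ j, j ≤ 5*nbar+3 → 0 ≤ wCinc nbar θ₂ j := by
  intro j
  induction j with
  | zero =>
    intro h; rw [wCinc]
    have h1 : 0 < Gc nbar θ₂ (4*nbar+4) := Gc_pos_C hθ (by omega) (by omega)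
    have h2 : 0 ≤ Dc nbar θ₂ (4*nbar+4) := Dc_nonneg nbar θ₂ _
    have h3 : 0 ≤ wBv nbar θ₂ (4*nbar+3) := wBv_nonneg hθ (by omega)
    positivity
  | succ k ih =>
    intro h
    rw [wCinc]
    have h1 : 0 < Gc nbar θ₂ (4*nbar+5+k) := Gc_pos_C hθ (by omega) (by omega)
    have h2 : 0 ≤ Dc nbar θ₂ (4*nbar+5+k) := Dc_nonneg nbar θ₂ _
    have h3 : 0 ≤ wCinc nbar θ₂ k := ih (by omega)
    positivity

lemma wv_nonneg (n : ℕ) : 0 ≤ wv nbar θ₂ n := by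
  unfold wv
  split_ifs with h1 h2 h3 h4
  · apply Finset.sum_nonneg
    intro j hj
    rw [Finset.mem_Ico] at hj
    exact wAinc_nonneg hθ _ hj.2
  · exact le_refl 0
  · exact wBv_nonneg hθ h3
  · apply Finset.sum_nonneg
    intro j hj
    rw [Finset.mem_Ico] at hj
    exact wCinc_nonneg hθ _ (by omega)
  · exact le_refl 0

end WeightFacts

section WeightRec
variable {nbar : ℕ} {θ₂ : ℝ}
variable (hθ : ∀ (n : ℕ) (k : ℤ), 1 ≤ n → n ≤ 9*nbar+8 → θ₂ * Real.sqrt (n : ℝ) ≠ (k : ℝ) * Real.pi)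

lemma wv_nbar : wv nbar θ₂ nbar = 0 := by
  unfold wv; rw [if_neg (by omega), if_pos rfl]

lemma wv_top : wv nbar θ₂ (9*nbar+8) = 0 := by
  unfold wv
  rw [if_neg (by omega), if_neg (by omega), if_neg (by omega), if_neg (by omega)]

lemma wv_A_eq {n : ℕ} (h : n ≤ nbar) :
    wv nbar θ₂ n = ∑ j ∈ Finset.Ico n nbar, wAinc nbar θ₂ j := by
  rcases lt_or_eq_of_le h with h' | h'
  · unfold wv; rw [if_pos h']
  · subst h'; rw [wv_nbar, Finset.Ico_self, Finset.sum_empty]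

lemma wv_A_diff {n : ℕ} (h : n < nbar) :
    wv nbar θ₂ n = wAinc nbar θ₂ n + wv nbar θ₂ (n+1) := by
  rw [wv_A_eq (le_of_lt h), wv_A_eq (by omega), Finset.sum_eq_sum_Ico_succ_bot h]

lemma wv_B_eq {n : ℕ} (h1 : nbar+1 ≤ n) (h2 : n ≤ 4*nbar+3) :
    wv nbar θ₂ n = wBv nbar θ₂ n := by
  unfold wv; rw [if_neg (by omega), if_neg (by omega), if_pos h2]

lemma wv_B_diff {n : ℕ} (h1 : nbar+1 ≤ n) (h2 : n ≤ 4*nbar+3) :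
    wv nbar θ₂ n = wBinc nbar θ₂ (4*nbar+3-n) + wv nbar θ₂ (n-1) := by
  rcases eq_or_lt_of_le h1 with h' | h'
  · subst h'
    rw [wv_B_eq h1 h2]
    simp only [Nat.add_sub_cancel, wv_nbar]
    unfold wBv
    rw [Finset.Icc_self, Finset.sum_singleton, add_zero]
  · obtain ⟨m, rfl⟩ : ∃ m, n = m+1 := ⟨n-1, by omega⟩
    rw [wv_B_eq h1 h2, wv_B_eq (by omega) (by omega)]
    unfold wBv
    rw [Finset.sum_Icc_succ_top (by omega)]
    simp only [Nat.add_sub_cancel]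
    ring

lemma wv_C_eq {n : ℕ} (h1 : 4*nbar+4 ≤ n) (h2 : n ≤ 9*nbar+8) :
    wv nbar θ₂ n = ∑ j ∈ Finset.Ico n (9*nbar+8), wCinc nbar θ₂ (j - (4*nbar+4)) := by
  rcases lt_or_eq_of_le h2 with h' | h'
  · unfold wv; rw [if_neg (by omega), if_neg (by omega), if_neg (by omega), if_pos h']
  · subst h'; rw [wv_top, Finset.Ico_self, Finset.sum_empty]

lemma wv_C_diff {n : ℕ} (h1 : 4*nbar+4 ≤ n) (h2 : n < 9*nbar+8) :
    wv nbar θ₂ n = wCinc nbar θ₂ (n - (4*nbar+4)) + wv nbar θ₂ (n+1) := by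
  rw [wv_C_eq h1 (le_of_lt h2), wv_C_eq (by omega) (by omega),
    Finset.sum_eq_sum_Ico_succ_bot h2]

include hθ

lemma idA0 (h : 0 < nbar) : Gc nbar θ₂ 0 * wAinc nbar θ₂ 0 = 1 := by
  rw [wAinc, mul_one_div, div_self (ne_of_gt (Gc_pos_A hθ h))]

lemma idA {m : ℕ} (h : m+1 < nbar) :
    Gc nbar θ₂ (m+1) * wAinc nbar θ₂ (m+1) = 1 + Dc nbar θ₂ (m+1) * wAinc nbar θ₂ m := by
  rw [wAinc, mul_div_cancel₀ _ (ne_of_gt (Gc_pos_A hθ h))]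

lemma idB_top : Dc nbar θ₂ (4*nbar+3) * wBinc nbar θ₂ 0 = 1 := by
  rw [wBinc, mul_one_div, div_self (ne_of_gt (Dc_pos_B hθ (by omega) (by omega)))]

lemma idB {n : ℕ} (h1 : nbar+1 ≤ n) (h2 : n < 4*nbar+3) :
    Dc nbar θ₂ n * wBinc nbar θ₂ (4*nbar+3-n)
      = 1 + Gc nbar θ₂ n * wBinc nbar θ₂ (4*nbar+3-n-1) := by
  have hj : 4*nbar+3-n = (4*nbar+2-n)+1 := by omega
  rw [hj, wBinc]
  have hn : 4*nbar+2-(4*nbar+2-n) = n := by omega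
  rw [hn, mul_div_cancel₀ _ (ne_of_gt (Dc_pos_B hθ h1 (by omega)))]
  norm_num

lemma idC0 : Gc nbar θ₂ (4*nbar+4) * wCinc nbar θ₂ 0
    = 1 + Dc nbar θ₂ (4*nbar+4) * wBv nbar θ₂ (4*nbar+3) := by
  rw [wCinc, mul_div_cancel₀ _ (ne_of_gt (Gc_pos_C hθ (by omega) (by omega)))]

lemma idC {n : ℕ} (h1 : 4*nbar+5 ≤ n) (h2 : n < 9*nbar+8) :
    Gc nbar θ₂ n * wCinc nbar θ₂ (n-(4*nbar+4))
      = 1 + Dc nbar θ₂ n * wCinc nbar θ₂ (n-(4*nbar+5)) := by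
  have hj : n-(4*nbar+4) = (n-(4*nbar+5))+1 := by omega
  rw [hj, wCinc]
  have hn : 4*nbar+5+(n-(4*nbar+5)) = n := by omega
  rw [hn, mul_div_cancel₀ _ (ne_of_gt (Gc_pos_C hθ (by omega) h2))]

end WeightRec

section CoeffBound
variable {nbar : ℕ} {θ₂ : ℝ}
variable (hθ : ∀ (n : ℕ) (k : ℤ), 1 ≤ n → n ≤ 9*nbar+8 → θ₂ * Real.sqrt (n : ℝ) ≠ (k : ℝ) * Real.pi)

include hθ in
lemma coeff_bound (n : ℕ) (hn : n < 9*nbar+9) :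
    (if n+1 < 9*nbar+9 then wv nbar θ₂ (n+1) * Gc nbar θ₂ n else 0)
      + wv nbar θ₂ n * Ec nbar θ₂ n
      + (if 1 ≤ n then wv nbar θ₂ (n-1) * Dc nbar θ₂ n else 0)
    ≤ wv nbar θ₂ n - (if n ≠ nbar ∧ n ≠ 9*nbar+8 then 1 else 0) := by
  have hE : Ec nbar θ₂ n = 1 - Gc nbar θ₂ n - Dc nbar θ₂ n := by
    have := rates_sum nbar θ₂ n; linarith
  by_cases hnb : n = nbar
  · subst hnb
    have hind : (if n ≠ n ∧ n ≠ 9*n+8 then (1:ℝ) else 0) = 0 := if_neg (by tauto)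
    rw [hind, sub_zero]
    simp only [Gc_nbar, Dc_nbar, wv_nbar, mul_zero, zero_mul, add_zero, zero_add]
    split_ifs <;> simp
  by_cases htop : n = 9*nbar+8
  · subst htop
    have hind : (if 9*nbar+8 ≠ nbar ∧ 9*nbar+8 ≠ 9*nbar+8 then (1:ℝ) else 0) = 0 :=
      if_neg (by tauto)
    have h1 : (if 9*nbar+8+1 < 9*nbar+9 then wv nbar θ₂ (9*nbar+8+1) * Gc nbar θ₂ (9*nbar+8)
        else 0) = 0 := if_neg (by omega)
    rw [hind, sub_zero, h1]
    simp only [wv_top, Dc_top, zero_mul, mul_zero, add_zero, zero_add]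
    split_ifs <;> simp
  have hlt : n < 9*nbar+8 := by omega
  have hind : (if n ≠ nbar ∧ n ≠ 9*nbar+8 then (1:ℝ) else 0) = 1 := if_pos ⟨hnb, htop⟩
  have h1 : (if n+1 < 9*nbar+9 then wv nbar θ₂ (n+1) * Gc nbar θ₂ n else 0)
      = wv nbar θ₂ (n+1) * Gc nbar θ₂ n := if_pos (by omega)
  rw [hind, h1]
  rcases lt_trichotomy n nbar with hA | hEq | hgt
  · -- region A
    have d1 : wv nbar θ₂ n = wAinc nbar θ₂ n + wv nbar θ₂ (n+1) := wv_A_diff hA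
    rcases Nat.eq_zero_or_pos n with rfl | hpos
    · rw [if_neg (by omega)]
      have id0 : Gc nbar θ₂ 0 * wAinc nbar θ₂ 0 = 1 := idA0 hθ hA
      have e1 : Gc nbar θ₂ 0 * wv nbar θ₂ 0
          = Gc nbar θ₂ 0 * wAinc nbar θ₂ 0 + Gc nbar θ₂ 0 * wv nbar θ₂ 1 := by
        rw [d1]; ring
      have e2 : 0 ≤ Dc nbar θ₂ 0 * wv nbar θ₂ 0 :=
        mul_nonneg (Dc_nonneg nbar θ₂ 0) (wv_nonneg hθ 0)
      rw [hE]
      nlinarith [e1, e2, id0]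
    · rw [if_pos (show 1 ≤ n by omega)]
      obtain ⟨m, rfl⟩ : ∃ m, n = m+1 := ⟨n-1, by omega⟩
      simp only [Nat.add_sub_cancel]
      have d0 : wv nbar θ₂ m = wAinc nbar θ₂ m + wv nbar θ₂ (m+1) := wv_A_diff (by omega)
      have idm : Gc nbar θ₂ (m+1) * wAinc nbar θ₂ (m+1)
          = 1 + Dc nbar θ₂ (m+1) * wAinc nbar θ₂ m := idA hθ hA
      have e1 : Gc nbar θ₂ (m+1) * wv nbar θ₂ (m+1)
          = Gc nbar θ₂ (m+1) * wAinc nbar θ₂ (m+1) + Gc nbar θ₂ (m+1) * wv nbar θ₂ (m+2) := by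
        rw [d1]; ring
      have e2 : Dc nbar θ₂ (m+1) * wv nbar θ₂ m
          = Dc nbar θ₂ (m+1) * wAinc nbar θ₂ m + Dc nbar θ₂ (m+1) * wv nbar θ₂ (m+1) := by
        rw [d0]; ring
      rw [hE]
      nlinarith [e1, e2, idm]
  · exact absurd hEq hnb
  · rw [if_pos (show 1 ≤ n by omega)]
    rcases le_or_gt n (4*nbar+3) with hB | hC
    · -- region B
      have d1 : wv nbar θ₂ n = wBinc nbar θ₂ (4*nbar+3-n) + wv nbar θ₂ (n-1) :=
        wv_B_diff (by omega) hB
      rcases eq_or_lt_of_le hB with hBtop | hBlt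
      · have hG : Gc nbar θ₂ n = 0 := by rw [hBtop]; exact Gc_mid
        have idt : Dc nbar θ₂ n * wBinc nbar θ₂ 0 = 1 := by rw [hBtop]; exact idB_top hθ
        have hz : 4*nbar+3-n = 0 := by omega
        rw [hz] at d1
        have e2 : Dc nbar θ₂ n * wv nbar θ₂ n
            = Dc nbar θ₂ n * wBinc nbar θ₂ 0 + Dc nbar θ₂ n * wv nbar θ₂ (n-1) := by
          rw [d1]; ring
        rw [hE, hG]
        nlinarith [e2, idt]
      · have d2 : wv nbar θ₂ (n+1) = wBinc nbar θ₂ (4*nbar+3-(n+1)) + wv nbar θ₂ n := by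
          have := wv_B_diff (nbar := nbar) (θ₂ := θ₂) (n := n+1) (by omega) (by omega)
          simpa using this
        have idm : Dc nbar θ₂ n * wBinc nbar θ₂ (4*nbar+3-n)
            = 1 + Gc nbar θ₂ n * wBinc nbar θ₂ (4*nbar+3-n-1) := idB hθ (by omega) hBlt
        have hidx : 4*nbar+3-(n+1) = 4*nbar+3-n-1 := by omega
        rw [hidx] at d2
        have e1 : Gc nbar θ₂ n * wv nbar θ₂ (n+1)
            = Gc nbar θ₂ n * wBinc nbar θ₂ (4*nbar+3-n-1) + Gc nbar θ₂ n * wv nbar θ₂ n := by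
          rw [d2]; ring
        have e2 : Dc nbar θ₂ n * wv nbar θ₂ n
            = Dc nbar θ₂ n * wBinc nbar θ₂ (4*nbar+3-n)
              + Dc nbar θ₂ n * wv nbar θ₂ (n-1) := by
          rw [d1]; ring
        rw [hE]
        nlinarith [e1, e2, idm]
    · -- region C
      have d1 : wv nbar θ₂ n = wCinc nbar θ₂ (n-(4*nbar+4)) + wv nbar θ₂ (n+1) :=
        wv_C_diff (by omega) hlt
      rcases eq_or_lt_of_le (show 4*nbar+4 ≤ n by omega) with hCbot | hCgt
      · -- n = 4nbar+4
        have hz : n-(4*nbar+4) = 0 := by omega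
        rw [hz] at d1
        have hm1 : n-1 = 4*nbar+3 := by omega
        have hwB : wv nbar θ₂ (n-1) = wBv nbar θ₂ (4*nbar+3) := by
          rw [hm1]; exact wv_B_eq (by omega) (by omega)
        have id0 : Gc nbar θ₂ n * wCinc nbar θ₂ 0
            = 1 + Dc nbar θ₂ n * wBv nbar θ₂ (4*nbar+3) := by
          rw [← hCbot]; exact idC0 hθ
        have e1 : Gc nbar θ₂ n * wv nbar θ₂ n
            = Gc nbar θ₂ n * wCinc nbar θ₂ 0 + Gc nbar θ₂ n * wv nbar θ₂ (n+1) := by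
          rw [d1]; ring
        have e2 : 0 ≤ Dc nbar θ₂ n * wv nbar θ₂ n :=
          mul_nonneg (Dc_nonneg nbar θ₂ n) (wv_nonneg hθ n)
        rw [hE, hwB]
        nlinarith [e1, e2, id0]
      · -- 4nbar+5 ≤ n
        obtain ⟨m, rfl⟩ : ∃ m, n = m+1 := ⟨n-1, by omega⟩
        simp only [Nat.add_sub_cancel]
        have d0 : wv nbar θ₂ m = wCinc nbar θ₂ (m-(4*nbar+4)) + wv nbar θ₂ (m+1) :=
          wv_C_diff (by omega) (by omega)
        have idm : Gc nbar θ₂ (m+1) * wCinc nbar θ₂ ((m+1)-(4*nbar+4))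
            = 1 + Dc nbar θ₂ (m+1) * wCinc nbar θ₂ ((m+1)-(4*nbar+5)) := idC hθ (by omega) hlt
        have hidx : (m+1)-(4*nbar+5) = m-(4*nbar+4) := by omega
        rw [hidx] at idm
        have e1 : Gc nbar θ₂ (m+1) * wv nbar θ₂ (m+1)
            = Gc nbar θ₂ (m+1) * wCinc nbar θ₂ ((m+1)-(4*nbar+4))
              + Gc nbar θ₂ (m+1) * wv nbar θ₂ (m+2) := by
          rw [d1]; ring
        have e2 : Dc nbar θ₂ (m+1) * wv nbar θ₂ m
            = Dc nbar θ₂ (m+1) * wCinc nbar θ₂ (m-(4*nbar+4))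
              + Dc nbar θ₂ (m+1) * wv nbar θ₂ (m+1) := by
          rw [d0]; ring
        rw [hE]
        nlinarith [e1, e2, idm]

end CoeffBound

section Evolution
open scoped ComplexOrder
variable {nbar : ℕ} {θ₂ : ℝ}

/-- diagonal entries as a function on ℕ (zero outside range) -/
def qv (nbar : ℕ) (ρ : Matrix (Fin (9*nbar+9)) (Fin (9*nbar+9)) ℂ) (n : ℕ) : ℝ :=
  if h : n < 9*nbar+9 then (ρ ⟨n,h⟩ ⟨n,h⟩).re else 0

lemma qv_nonneg {ρ : Matrix (Fin (9*nbar+9)) (Fin (9*nbar+9)) ℂ} (h : ρ.PosSemidef) (n : ℕ) :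
    0 ≤ qv nbar ρ n := by
  unfold qv
  split_ifs with hn
  · have := h.re_dotProduct_nonneg (Pi.single ⟨n,hn⟩ 1)
    simpa [dotProduct, Matrix.mulVec, Pi.single_apply, Finset.sum_ite_eq,
      Finset.sum_ite_eq'] using this
  · exact le_refl 0

lemma Phi9_psd {ρ : Matrix (Fin (9*nbar+9)) (Fin (9*nbar+9)) ℂ} (h : ρ.PosSemidef) :
    (Phi9 nbar θ₂ ρ).PosSemidef :=
  ((h.mul_mul_conjTranspose_same _).add (h.mul_mul_conjTranspose_same _)).add
    (h.mul_mul_conjTranspose_same _)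

lemma qv_step (ρ : Matrix (Fin (9*nbar+9)) (Fin (9*nbar+9)) ℂ) (n : ℕ) (hn : n < 9*nbar+9) :
    qv nbar (Phi9 nbar θ₂ ρ) n
      = (if 1 ≤ n then Gc nbar θ₂ (n-1) * qv nbar ρ (n-1) else 0)
        + Ec nbar θ₂ n * qv nbar ρ n
        + Dc nbar θ₂ (n+1) * qv nbar ρ (n+1) := by
  unfold qv
  rw [dif_pos hn]
  show ((Mg9 nbar θ₂ * ρ * (Mg9 nbar θ₂)ᴴ + Me9 nbar θ₂ * ρ * (Me9 nbar θ₂)ᴴ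
    + Mm9 nbar θ₂ * ρ * (Mm9 nbar θ₂)ᴴ) ⟨n,hn⟩ ⟨n,hn⟩).re = _
  rw [Matrix.add_apply, Matrix.add_apply, Mg_diag ρ n hn, Me_diag ρ n hn, Mm_diag ρ n hn]
  by_cases h1 : 1 ≤ n
  · rw [dif_pos h1, if_pos h1, dif_pos (show n-1 < 9*nbar+9 by omega)]
    by_cases h2 : n+1 < 9*nbar+9
    · rw [dif_pos h2, dif_pos h2]
      simp [Complex.add_re, Complex.mul_re, Complex.ofReal_re, Complex.ofReal_im]
      intro h; exact absurd hn (by omega)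
    · rw [dif_neg h2, dif_neg h2, mul_zero]
      simp [Complex.add_re, Complex.mul_re, Complex.ofReal_re, Complex.ofReal_im]
      intro h; exact absurd hn (by omega)
  · rw [dif_neg h1, if_neg h1]
    by_cases h2 : n+1 < 9*nbar+9
    · rw [dif_pos h2, dif_pos h2]
      simp [Complex.add_re, Complex.mul_re, Complex.ofReal_re, Complex.ofReal_im]
      intro h; exact absurd hn (by omega)
    · rw [dif_neg h2, dif_neg h2, mul_zero]
      simp [Complex.add_re, Complex.mul_re, Complex.ofReal_re, Complex.ofReal_im]
      intro h; exact absurd hn (by omega)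

end Evolution

section PSDEntry
open scoped ComplexOrder

lemma psd_diag_re_nonneg {N : ℕ} {A : Matrix (Fin N) (Fin N) ℂ} (h : A.PosSemidef) (i : Fin N) :
    0 ≤ (A i i).re := by
  have := h.re_dotProduct_nonneg (Pi.single i 1)
  simpa [dotProduct, Matrix.mulVec, Pi.single_apply, Finset.sum_ite_eq,
    Finset.sum_ite_eq'] using this

lemma psd_quadform_expand {N : ℕ} (A : Matrix (Fin N) (Fin N) ℂ) {a b : Fin N} (hab : a ≠ b)
    (u v : ℂ) :
    (star (fun i => u * (if i = a then 1 else 0) + v * (if i = b then 1 else 0)) ⬝ᵥ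
      A.mulVec (fun i => u * (if i = a then 1 else 0) + v * (if i = b then 1 else 0)))
    = star u * u * A a a + star u * v * A a b + star v * u * A b a + star v * v * A b b := by
  simp only [dotProduct, Matrix.mulVec, Pi.star_apply, star_add, star_mul',
    apply_ite (star : ℂ → ℂ), star_one, star_zero, mul_add, add_mul, Finset.sum_add_distrib,
    mul_ite, ite_mul, mul_zero, zero_mul, mul_one, one_mul, Finset.sum_ite_eq,
    Finset.sum_ite_eq', Finset.mem_univ, if_true]
  ring

lemma psd_entry_bound {N : ℕ} {A : Matrix (Fin N) (Fin N) ℂ} (h : A.PosSemidef) {a b : Fin N}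
    (hab : a ≠ b) : Complex.normSq (A a b) ≤ (A a a).re * (A b b).re := by
  set z := A a b with hz
  by_cases hz0 : z = 0
  · rw [hz0]
    simp only [map_zero]
    exact mul_nonneg (psd_diag_re_nonneg h a) (psd_diag_re_nonneg h b)
  · set r := ‖z‖ with hr
    have hrpos : 0 < r := norm_pos_iff.mpr hz0
    set c : ℂ := -(starRingEnd ℂ z) / r with hc
    have hba : A b a = starRingEnd ℂ z := by
      have := congrFun (congrFun h.1.eq b) a
      rw [Matrix.conjTranspose_apply] at this
      rw [← this, hz]
      rfl
    have hzz : z * starRingEnd ℂ z = (r^2 : ℝ) := by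
      rw [Complex.mul_conj]
      norm_cast
      rw [hr, Complex.sq_norm]
    have hq : ∀ t : ℝ, 0 ≤ (A a a).re * (t*t) + (-(2*r)) * t + (A b b).re := by
      intro t
      have h0 := h.re_dotProduct_nonneg
        (fun i => (t:ℂ) * (if i = a then 1 else 0) + c * (if i = b then 1 else 0))
      rw [psd_quadform_expand A hab] at h0
      have haa : (A a a).im = 0 := by
        have := congrFun (congrFun h.1.eq a) a
        rw [Matrix.conjTranspose_apply] at this
        exact Complex.conj_eq_iff_im.mp this
      have hbb : (A b b).im = 0 := by
        have := congrFun (congrFun h.1.eq b) b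
        rw [Matrix.conjTranspose_apply] at this
        exact Complex.conj_eq_iff_im.mp this
      have ha' : A a a = (((A a a).re : ℝ) : ℂ) := by
        rw [← Complex.re_add_im (A a a), haa]; simp
      have hb' : A b b = (((A b b).re : ℝ) : ℂ) := by
        rw [← Complex.re_add_im (A b b), hbb]; simp
      have hid : star (t:ℂ) * t * A a a + star (t:ℂ) * c * z + star c * (t:ℂ) * A b a
          + star c * c * A b b
          = (((A a a).re * (t*t) + (-(2*r)) * t + (A b b).re : ℝ) : ℂ) := by
        rw [hba, hc, Complex.star_def, Complex.conj_ofReal, map_div₀, map_neg,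
          Complex.conj_conj, Complex.conj_ofReal, ha', hb']
        field_simp
        push_cast at hzz ⊢
        ring_nf
        ring_nf at hzz
        linear_combination (-(2*(t:ℂ)*(r:ℂ)) + ((A b b).re : ℂ)) * hzz
      rw [← hz, hid] at h0
      simpa using h0
    have hd := discrim_le_zero hq
    rw [discrim] at hd
    have : Complex.normSq z = r^2 := by rw [hr, Complex.sq_norm]
    nlinarith [psd_diag_re_nonneg h a, psd_diag_re_nonneg h b]

end PSDEntry

section LyapStep
open scoped ComplexOrder
variable {nbar : ℕ} {θ₂ : ℝ}
variable (hθ : ∀ (n : ℕ) (k : ℤ), 1 ≤ n → n ≤ 9*nbar+8 → θ₂ * Real.sqrt (n : ℝ) ≠ (k : ℝ) * Real.pi)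

include hθ in
lemma lyap_step {ρ : Matrix (Fin (9*nbar+9)) (Fin (9*nbar+9)) ℂ} (hpsd : ρ.PosSemidef) :
    ∑ n ∈ Finset.range (9*nbar+9), wv nbar θ₂ n * qv nbar (Phi9 nbar θ₂ ρ) n
    ≤ ∑ n ∈ Finset.range (9*nbar+9), wv nbar θ₂ n * qv nbar ρ n
      - ∑ n ∈ Finset.range (9*nbar+9),
          (if n ≠ nbar ∧ n ≠ 9*nbar+8 then (1:ℝ) else 0) * qv nbar ρ n := by
  have hstep : ∀ n ∈ Finset.range (9*nbar+9), wv nbar θ₂ n * qv nbar (Phi9 nbar θ₂ ρ) n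
      = wv nbar θ₂ n * (if 1 ≤ n then Gc nbar θ₂ (n-1) * qv nbar ρ (n-1) else 0)
        + wv nbar θ₂ n * (Ec nbar θ₂ n * qv nbar ρ n)
        + wv nbar θ₂ n * (Dc nbar θ₂ (n+1) * qv nbar ρ (n+1)) := by
    intro n hn
    rw [Finset.mem_range] at hn
    rw [qv_step ρ n hn]
    ring
  rw [Finset.sum_congr rfl hstep, Finset.sum_add_distrib, Finset.sum_add_distrib]
  have hS1 : ∑ n ∈ Finset.range (9*nbar+9),
      wv nbar θ₂ n * (if 1 ≤ n then Gc nbar θ₂ (n-1) * qv nbar ρ (n-1) else 0)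
      = ∑ n ∈ Finset.range (9*nbar+9),
        (if n+1 < 9*nbar+9 then wv nbar θ₂ (n+1) * Gc nbar θ₂ n else 0) * qv nbar ρ n := by
    rw [Finset.sum_range_succ' _ (9*nbar+8), Finset.sum_range_succ _ (9*nbar+8)]
    rw [if_neg (by omega : ¬(9*nbar+8+1 < 9*nbar+9)), if_neg (by omega : ¬(1 ≤ 0))]
    rw [mul_zero, zero_mul, add_zero, add_zero]
    apply Finset.sum_congr rfl
    intro k hk
    rw [Finset.mem_range] at hk
    rw [if_pos (by omega : 1 ≤ k+1), if_pos (by omega : k+1 < 9*nbar+9)]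
    simp only [Nat.add_sub_cancel]
    ring
  have hS3 : ∑ n ∈ Finset.range (9*nbar+9),
      wv nbar θ₂ n * (Dc nbar θ₂ (n+1) * qv nbar ρ (n+1))
      = ∑ n ∈ Finset.range (9*nbar+9),
        (if 1 ≤ n then wv nbar θ₂ (n-1) * Dc nbar θ₂ n else 0) * qv nbar ρ n := by
    rw [Finset.sum_range_succ _ (9*nbar+8)]
    rw [show qv nbar ρ (9*nbar+8+1) = 0 from dif_neg (by omega)]
    rw [mul_zero, mul_zero, add_zero]
    rw [Finset.sum_range_succ' _ (9*nbar+8)]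
    rw [if_neg (by omega : ¬(1 ≤ 0)), zero_mul, add_zero]
    apply Finset.sum_congr rfl
    intro k hk
    rw [Finset.mem_range] at hk
    rw [if_pos (by omega : 1 ≤ k+1)]
    simp only [Nat.add_sub_cancel]
    ring
  rw [hS1, hS3, ← Finset.sum_add_distrib, ← Finset.sum_add_distrib, ← Finset.sum_sub_distrib]
  apply Finset.sum_le_sum
  intro n hn
  rw [Finset.mem_range] at hn
  have hcb := coeff_bound hθ n hn
  have hq := qv_nonneg hpsd n
  have := mul_le_mul_of_nonneg_right hcb hq
  nlinarith [this]

end LyapStep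

/-- LaSalle remark: if θ₂·√n is never an integer multiple of π for
1 ≤ n ≤ 9n̄+8, then every entrywise accumulation point of the iterates of the Kraus map
starting from a density matrix is supported on the span of |n̄⟩ and |9n̄+8⟩. -/
theorem lasalle_accumulation (nbar : ℕ) (θ₂ : ℝ)
    (hθ : ∀ (n : ℕ) (k : ℤ), 1 ≤ n → n ≤ 9*nbar+8 → θ₂ * Real.sqrt (n : ℝ) ≠ (k : ℝ) * Real.pi)
    (ρ₀ : Matrix (Fin (9*nbar+9)) (Fin (9*nbar+9)) ℂ)
    (hpsd : ρ₀.PosSemidef) (htr : ρ₀.trace = 1)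
    (ρinf : Matrix (Fin (9*nbar+9)) (Fin (9*nbar+9)) ℂ)
    (φ : ℕ → ℕ) (hφ : StrictMono φ)
    (hconv : ∀ a b : Fin (9*nbar+9),
      Filter.Tendsto (fun k => (Phi9 nbar θ₂)^[φ k] ρ₀ a b) Filter.atTop (nhds (ρinf a b))) :
    ∀ a b : Fin (9*nbar+9),
      ¬(((a : ℕ) = nbar ∨ (a : ℕ) = 9*nbar+8) ∧ ((b : ℕ) = nbar ∨ (b : ℕ) = 9*nbar+8)) →
      ρinf a b = 0 := by
  set ρk : ℕ → Matrix (Fin (9*nbar+9)) (Fin (9*nbar+9)) ℂ :=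
    fun k => (Phi9 nbar θ₂)^[k] ρ₀ with hρk
  have hpsdk : ∀ k, (ρk k).PosSemidef := by
    intro k
    induction k with
    | zero => exact hpsd
    | succ m ih =>
      show ((Phi9 nbar θ₂)^[m+1] ρ₀).PosSemidef
      rw [Function.iterate_succ_apply']
      exact Phi9_psd ih
  set V : ℕ → ℝ := fun k => ∑ n ∈ Finset.range (9*nbar+9), wv nbar θ₂ n * qv nbar (ρk k) n
    with hV
  set S : ℕ → ℝ := fun k => ∑ n ∈ Finset.range (9*nbar+9),
    (if n ≠ nbar ∧ n ≠ 9*nbar+8 then (1:ℝ) else 0) * qv nbar (ρk k) n with hS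
  have hVstep : ∀ k, V (k+1) ≤ V k - S k := by
    intro k
    have hit : ρk (k+1) = Phi9 nbar θ₂ (ρk k) := Function.iterate_succ_apply' _ _ _
    simp only [hV, hS, hit]
    exact lyap_step hθ (hpsdk k)
  have hS0 : ∀ k, 0 ≤ S k := by
    intro k
    apply Finset.sum_nonneg
    intro n _
    apply mul_nonneg _ (qv_nonneg (hpsdk k) n)
    split_ifs <;> norm_num
  have hV0 : ∀ k, 0 ≤ V k := by
    intro k
    apply Finset.sum_nonneg
    intro n _
    exact mul_nonneg (wv_nonneg hθ n) (qv_nonneg (hpsdk k) n)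
  have hmono : Antitone V := antitone_nat_of_succ_le (fun k => by linarith [hVstep k, hS0 k])
  have hVconv : Filter.Tendsto V Filter.atTop (nhds (⨅ i, V i)) :=
    tendsto_atTop_ciInf hmono ⟨0, by rintro x ⟨k, rfl⟩; exact hV0 k⟩
  have hVconv' : Filter.Tendsto (fun k => V (k+1)) Filter.atTop (nhds (⨅ i, V i)) :=
    hVconv.comp (Filter.tendsto_add_atTop_nat 1)
  have hSconv : Filter.Tendsto S Filter.atTop (nhds 0) := by
    apply squeeze_zero hS0 (fun k => by linarith [hVstep k] : ∀ k, S k ≤ V k - V (k+1))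
    have := hVconv.sub hVconv'
    simpa using this
  have htrans : ∀ n : ℕ, n < 9*nbar+9 → n ≠ nbar → n ≠ 9*nbar+8 →
      Filter.Tendsto (fun k => qv nbar (ρk k) n) Filter.atTop (nhds 0) := by
    intro n hn h1 h2
    apply squeeze_zero (fun k => qv_nonneg (hpsdk k) n) _ hSconv
    intro k
    have hmem : n ∈ Finset.range (9*nbar+9) := Finset.mem_range.mpr hn
    have := Finset.single_le_sum (f := fun m =>
        (if m ≠ nbar ∧ m ≠ 9*nbar+8 then (1:ℝ) else 0) * qv nbar (ρk k) m)
      (fun m _ => mul_nonneg (by split_ifs <;> norm_num) (qv_nonneg (hpsdk k) m)) hmem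
    have hfn : (fun m => (if m ≠ nbar ∧ m ≠ 9*nbar+8 then (1:ℝ) else 0) * qv nbar (ρk k) m) n
        = qv nbar (ρk k) n := by
      show (if n ≠ nbar ∧ n ≠ 9*nbar+8 then (1:ℝ) else 0) * qv nbar (ρk k) n = qv nbar (ρk k) n
      rw [if_pos ⟨h1, h2⟩, one_mul]
    rw [if_pos ⟨h1, h2⟩, one_mul] at this
    exact this
  have hqeq : ∀ (a : Fin (9*nbar+9)) (k : ℕ), qv nbar (ρk k) (a : ℕ) = ((ρk k) a a).re := by
    intro a k
    unfold qv
    rw [dif_pos a.isLt]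
  have hdiag : ∀ a : Fin (9*nbar+9), (a : ℕ) ≠ nbar → (a : ℕ) ≠ 9*nbar+8 → ρinf a a = 0 := by
    intro a h1 h2
    have hlim1 : Filter.Tendsto (fun k => ((ρk (φ k)) a a).re) Filter.atTop (nhds 0) := by
      have := (htrans (a : ℕ) a.isLt h1 h2).comp hφ.tendsto_atTop
      simpa [hqeq a, Function.comp_def] using this
    have hlim2 : Filter.Tendsto (fun k => ((ρk (φ k)) a a).re) Filter.atTop
        (nhds ((ρinf a a).re)) := (Complex.continuous_re.tendsto _).comp (hconv a a)
    have hre : (ρinf a a).re = 0 := tendsto_nhds_unique hlim2 hlim1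
    have him : (ρinf a a).im = 0 := by
      have hcon : Filter.Tendsto (fun k => ((ρk (φ k)) a a).im) Filter.atTop
          (nhds ((ρinf a a).im)) := (Complex.continuous_im.tendsto _).comp (hconv a a)
      have hzero : ∀ k, ((ρk (φ k)) a a).im = 0 := by
        intro k
        have := congrFun (congrFun (hpsdk (φ k)).1.eq a) a
        rw [Matrix.conjTranspose_apply] at this
        exact Complex.conj_eq_iff_im.mp this
      simp only [hzero] at hcon
      exact tendsto_nhds_unique hcon tendsto_const_nhds
    exact Complex.ext hre him
  intro a b hnot
  by_cases hab : a = b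
  · subst hab
    have : ¬((a : ℕ) = nbar ∨ (a : ℕ) = 9*nbar+8) := fun h => hnot ⟨h, h⟩
    push_neg at this
    exact hdiag a this.1 this.2
  · have hnormSq : Filter.Tendsto (fun k => Complex.normSq ((ρk (φ k)) a b)) Filter.atTop
        (nhds (Complex.normSq (ρinf a b))) :=
      (Complex.continuous_normSq.tendsto _).comp (hconv a b)
    have hprod : Filter.Tendsto
        (fun k => ((ρk (φ k)) a a).re * ((ρk (φ k)) b b).re) Filter.atTop
        (nhds ((ρinf a a).re * (ρinf b b).re)) :=
      (((Complex.continuous_re.tendsto _).comp (hconv a a)).mul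
        ((Complex.continuous_re.tendsto _).comp (hconv b b)))
    have hle : Complex.normSq (ρinf a b) ≤ (ρinf a a).re * (ρinf b b).re :=
      le_of_tendsto_of_tendsto' hnormSq hprod
        (fun k => psd_entry_bound (hpsdk (φ k)) hab)
    have hzero : (ρinf a a).re * (ρinf b b).re = 0 := by
      by_cases hPa : (a : ℕ) = nbar ∨ (a : ℕ) = 9*nbar+8
      · have hPb : ¬((b : ℕ) = nbar ∨ (b : ℕ) = 9*nbar+8) := fun h => hnot ⟨hPa, h⟩
        push_neg at hPb
        rw [hdiag b hPb.1 hPb.2]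
        simp
      · push_neg at hPa
        rw [hdiag a hPa.1 hPa.2]
        simp
    rw [hzero] at hle
    have := Complex.normSq_nonneg (ρinf a b)
    exact Complex.normSq_eq_zero.mp (le_antisymm hle this)
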